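/- Let u be a harmonic function on a domain Ω ⊂ ℂ with harmonic conjugate u*, and set f = u + iu* (conformal away from critical points of u). Consider the Hamiltonian system on Ω×ℂ with Hamiltonian H = (1/2)|p|² − (1/2)|∇u(q)|² (kinetic plus potential energy V = −(1/2)|∇u|²). Then the traces in Ω of the trajectories lying on the zero-energy surface H = 0 are exactly the inverse images under the conformal map w = f(z) of the straight lines in the w-plane. -/

import Mathlib

open Complex Filter Set MeasureTheory

noncomputable section

/-- The Laplacian of a real-valued function on `ℂ` (viewed as `ℝ²`). -/
def lap2 (f : ℂ → ℝ) (z : ℂ) : ℝ :=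
  fderiv ℝ (fun w => fderiv ℝ f w 1) z 1 +
    fderiv ℝ (fun w => fderiv ℝ f w Complex.I) z Complex.I

/-- `f` is harmonic on the set `s`. -/
def HarmOn (f : ℂ → ℝ) (s : Set ℂ) : Prop :=
  ContDiffOn ℝ 2 f s ∧ ∀ z ∈ s, lap2 f z = 0

/-- Wirtinger derivative `∂f/∂z` of a real-valued function. -/
def wdz (f : ℂ → ℝ) (z : ℂ) : ℂ :=
  (((fderiv ℝ f z 1 : ℝ) : ℂ) - Complex.I * ((fderiv ℝ f z Complex.I : ℝ) : ℂ)) / 2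

/-- Wirtinger derivative `∂f/∂z̄` of a real-valued function. -/
def wdzbar (f : ℂ → ℝ) (z : ℂ) : ℂ :=
  (((fderiv ℝ f z 1 : ℝ) : ℂ) + Complex.I * ((fderiv ℝ f z Complex.I : ℝ) : ℂ)) / 2

/-- Wirtinger derivative `∂f/∂z` of a complex-valued function. -/
def wdzC (f : ℂ → ℂ) (z : ℂ) : ℂ :=
  (fderiv ℝ f z 1 - Complex.I * fderiv ℝ f z Complex.I) / 2

/-- Wirtinger derivative `∂f/∂z̄` of a complex-valued function. -/
def wdzbarC (f : ℂ → ℂ) (z : ℂ) : ℂ :=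
  (fderiv ℝ f z 1 + Complex.I * fderiv ℝ f z Complex.I) / 2

/-- The mixed derivative `∂²G/∂z∂ζ` of a two-variable function `G`. -/
def d2G (G : ℂ → ℂ → ℝ) (z ζ : ℂ) : ℂ := wdzC (fun w => wdz (fun x => G x w) z) ζ

/-- The mixed derivative `∂²G/∂z∂ζ̄` of a two-variable function `G`. -/
def d2Gbar (G : ℂ → ℂ → ℝ) (z ζ : ℂ) : ℂ := wdzbarC (fun w => wdz (fun x => G x w) z) ζ

/-- The Bergman kernel `K(z,ζ) = -(2/π)·∂²G/∂z∂ζ̄` of the Green's function `G`. -/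
def KB (G : ℂ → ℂ → ℝ) (z ζ : ℂ) : ℂ := -((2 / Real.pi : ℝ) : ℂ) * d2Gbar G z ζ

/-- The Schiffer kernel `L(z,ζ) = -(2/π)·∂²G/∂z∂ζ` of the Green's function `G`. -/
def LB (G : ℂ → ℂ → ℝ) (z ζ : ℂ) : ℂ := -((2 / Real.pi : ℝ) : ℂ) * d2G G z ζ

/-- `G` is the (Dirichlet) Green's function of the domain `Ω`:
it is symmetric and positive, `G(·,ζ) = -log|z-ζ| + harmonic` in `Ω`,
and `G(·,ζ)` tends to `0` at every boundary point. -/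
structure IsGreenFn (Ω : Set ℂ) (G : ℂ → ℂ → ℝ) : Prop where
  symm : ∀ z ∈ Ω, ∀ ζ ∈ Ω, G z ζ = G ζ z
  pos : ∀ ζ ∈ Ω, ∀ z ∈ Ω, z ≠ ζ → 0 < G z ζ
  harm : ∀ ζ ∈ Ω, ∃ h : ℂ → ℝ, HarmOn h Ω ∧
    ∀ z ∈ Ω, z ≠ ζ → G z ζ = -Real.log ‖z - ζ‖ + h z
  bdry : ∀ ζ ∈ Ω, ∀ w ∈ frontier Ω, Filter.Tendsto (fun z => G z ζ) (nhdsWithin w Ω) (nhds 0)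

/-- The euclidean norm of the gradient of a real-valued function on `ℂ`. -/
def nGrad (f : ℂ → ℝ) (z : ℂ) : ℝ :=
  Real.sqrt ((fderiv ℝ f z 1) ^ 2 + (fderiv ℝ f z Complex.I) ^ 2)

/-- The gradient of a real-valued function on `ℂ`, as a complex number. -/
def gradC (f : ℂ → ℝ) (z : ℂ) : ℂ :=
  ((fderiv ℝ f z 1 : ℝ) : ℂ) + Complex.I * ((fderiv ℝ f z Complex.I : ℝ) : ℂ)

/-- The signed euclidean curvature of a parametrized plane curve. -/
def curvK (γ : ℝ → ℂ) (t : ℝ) : ℝ :=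
  ((starRingEnd ℂ) (deriv γ t) * deriv (deriv γ) t).im / ‖deriv γ t‖ ^ 3

/-- The potential energy `V = -(1/2)|∇u|²`. -/
def potV (u : ℂ → ℝ) (z : ℂ) : ℝ :=
  -(1 / 2) * ((fderiv ℝ u z 1) ^ 2 + (fderiv ℝ u z Complex.I) ^ 2)

/-- The density of the Poincaré metric (of curvature `-4`) obtained by pulling back
`|dζ|/(1-|ζ|²)` under a conformal map `φ` onto the unit disk. -/
def poincareDen (φ : ℂ → ℂ) (z : ℂ) : ℝ := ‖deriv φ z‖ / (1 - ‖φ z‖ ^ 2)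

/-- The period of the differential on the Schottky double represented by the pair
`(f₁, f₂)` along the closed cycle obtained from the path `γ` (run through `Ω`)
together with its mirror path on the back side of the double. -/
def pairPeriod (f₁ f₂ : ℂ → ℂ) (γ : ℝ → ℂ) : ℂ :=
  (∫ t in (0:ℝ)..1, f₁ (γ t) * deriv γ t) -
    (starRingEnd ℂ) (∫ t in (0:ℝ)..1, f₂ (γ t) * deriv γ t)

/-- The annulus `A_{1,R} = {z : 1 < |z| < R}`. -/
def ann (R : ℝ) : Set ℂ := {z : ℂ | 1 < ‖z‖ ∧ ‖z‖ < R}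

/-- The lattice point `2m₁ω₁ + 2m₂ω₂` for the half-periods `ω₁ = log R`, `ω₂ = iπ`. -/
def latC (R : ℝ) (p : ℤ × ℤ) : ℂ :=
  2 * (p.1 : ℂ) * ((Real.log R : ℝ) : ℂ) + 2 * (p.2 : ℂ) * (((Real.pi : ℝ) : ℂ) * Complex.I)

/-- The Weierstrass `℘`-function for the lattice with half-periods `log R` and `iπ`. -/
def weierP (R : ℝ) (z : ℂ) : ℂ :=
  1 / z ^ 2 + ∑' p : {p : ℤ × ℤ // p ≠ 0}, (1 / (z - latC R p.val) ^ 2 - 1 / latC R p.val ^ 2)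

/-- The Weierstrass `ζ`-function for the lattice with half-periods `log R` and `iπ`. -/
def weierZ (R : ℝ) (z : ℂ) : ℂ :=
  1 / z + ∑' p : {p : ℤ × ℤ // p ≠ 0},
    (1 / (z - latC R p.val) + 1 / latC R p.val + z / latC R p.val ^ 2)

/-- The constant `η₁ = ζ(ω₁)` for the half-period `ω₁ = log R`. -/
def eta1 (R : ℝ) : ℂ := weierZ R ((Real.log R : ℝ) : ℂ)

/-- `H` is the analytic completion (in the first variable) of the regular part of the
Green's function `G` of `Ω`, normalized by `Im H(ζ,ζ) = 0`. -/
structure IsACompl (Ω : Set ℂ) (G : ℂ → ℂ → ℝ) (H : ℂ → ℂ → ℂ) : Prop where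
  holo : ∀ ζ ∈ Ω, DifferentiableOn ℂ (fun z => H z ζ) Ω
  re : ∀ ζ ∈ Ω, ∀ z ∈ Ω, z ≠ ζ → (H z ζ).re = G z ζ + Real.log ‖z - ζ‖
  norm : ∀ ζ ∈ Ω, (H ζ ζ).im = 0

end

noncomputable section

def Fc (u : ℂ → ℝ) (z : ℂ) : ℂ :=
  ((fderiv ℝ u z 1 : ℝ) : ℂ) - Complex.I * ((fderiv ℝ u z Complex.I : ℝ) : ℂ)

def Fc' (u : ℂ → ℝ) (z : ℂ) : ℂ :=
  ((fderiv ℝ (fun w => fderiv ℝ u w 1) z 1 : ℝ) : ℂ)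
    - Complex.I * ((fderiv ℝ (fun w => fderiv ℝ u w Complex.I) z 1 : ℝ) : ℂ)

lemma hasFDerivAt_complexOfReal {f : ℂ → ℂ} {L : ℂ →L[ℂ] ℂ} {x : ℂ}
    (h : HasFDerivAt f (L.restrictScalars ℝ) x) : HasFDerivAt f L x :=
  .of_isLittleO h.isLittleO

lemma clm_eq_of_basis {L L' : ℂ →L[ℝ] ℂ} (h1 : L 1 = L' 1) (hI : L Complex.I = L' Complex.I) :
    L = L' := by
  ext h
  have hh : h = h.re • (1 : ℂ) + h.im • Complex.I := by
    simp only [Complex.real_smul, Complex.ofReal_re, Complex.ofReal_im, mul_one]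
    rw [Complex.re_add_im]
  rw [hh, map_add, map_add, _root_.map_smul, _root_.map_smul, _root_.map_smul, _root_.map_smul, h1, hI]

section aux

variable {Ω : Set ℂ} {u : ℂ → ℝ} {z : ℂ}

lemma hD2 (hopen : IsOpen Ω) (hu : ContDiffOn ℝ 2 u Ω) (hz : z ∈ Ω) :
    HasFDerivAt (fderiv ℝ u) (fderiv ℝ (fderiv ℝ u) z) z := by
  have h1 : ContDiffOn ℝ 1 (fderiv ℝ u) Ω := hu.fderiv_of_isOpen hopen (by norm_num)
  exact ((h1.differentiableOn one_ne_zero).differentiableAt (hopen.mem_nhds hz)).hasFDerivAt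

lemma hPart (hopen : IsOpen Ω) (hu : ContDiffOn ℝ 2 u Ω) (hz : z ∈ Ω) (c : ℂ) :
    HasFDerivAt (fun w => fderiv ℝ u w c) ((fderiv ℝ (fderiv ℝ u) z).flip c) z := by
  have := (hD2 hopen hu hz).clm_apply (hasFDerivAt_const c z)
  simpa using this

lemma fderiv_part (hopen : IsOpen Ω) (hu : ContDiffOn ℝ 2 u Ω) (hz : z ∈ Ω) (c m : ℂ) :
    fderiv ℝ (fun w => fderiv ℝ u w c) z m = fderiv ℝ (fderiv ℝ u) z m c := by
  rw [(hPart hopen hu hz c).fderiv]; rfl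

lemma hSymm (hopen : IsOpen Ω) (hu : ContDiffOn ℝ 2 u Ω) (hz : z ∈ Ω) (v w : ℂ) :
    fderiv ℝ (fderiv ℝ u) z v w = fderiv ℝ (fderiv ℝ u) z w v := by
  apply second_derivative_symmetric_of_eventually (f := u) _ (hD2 hopen hu hz)
  filter_upwards [hopen.mem_nhds hz] with y hy
  exact ((hu.differentiableOn (by norm_num)).differentiableAt (hopen.mem_nhds hy)).hasFDerivAt

lemma hLap (hopen : IsOpen Ω) (hu : HarmOn u Ω) (hz : z ∈ Ω) :
    fderiv ℝ (fderiv ℝ u) z 1 1 + fderiv ℝ (fderiv ℝ u) z Complex.I Complex.I = 0 := by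
  have := hu.2 z hz
  rwa [lap2, fderiv_part hopen hu.1 hz, fderiv_part hopen hu.1 hz] at this

/-- `Fc u` is complex differentiable on `Ω` with derivative `Fc' u`. -/
lemma Fc_hasDerivAt (hopen : IsOpen Ω) (hu : HarmOn u Ω) (hz : z ∈ Ω) :
    HasDerivAt (Fc u) (Fc' u z) z := by
  set D2 := fderiv ℝ (fderiv ℝ u) z with hD2def
  have ha := hPart hopen hu.1 hz 1
  have hb := hPart hopen hu.1 hz Complex.I
  have hra : HasFDerivAt (fun w => ((fderiv ℝ u w 1 : ℝ) : ℂ))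
      (Complex.ofRealCLM.comp (D2.flip 1)) z :=
    Complex.ofRealCLM.hasFDerivAt.comp z ha
  have hrb : HasFDerivAt (fun w => Complex.I * ((fderiv ℝ u w Complex.I : ℝ) : ℂ))
      (Complex.I • (Complex.ofRealCLM.comp (D2.flip Complex.I))) z :=
    (Complex.ofRealCLM.hasFDerivAt.comp z hb).const_mul Complex.I
  have hL : HasFDerivAt (Fc u)
      (Complex.ofRealCLM.comp (D2.flip 1) - Complex.I • (Complex.ofRealCLM.comp (D2.flip Complex.I))) z :=
    hra.sub hrb
  have hM : ((ContinuousLinearMap.smulRight (1 : ℂ →L[ℂ] ℂ) (Fc' u z)).restrictScalars ℝ)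
      = (Complex.ofRealCLM.comp (D2.flip 1) - Complex.I • (Complex.ofRealCLM.comp (D2.flip Complex.I))) := by
    apply clm_eq_of_basis
    · simp [Fc', fderiv_part hopen hu.1 hz, hD2def]
    · have hs := hSymm hopen hu.1 hz 1 Complex.I
      have hl := hLap hopen hu hz
      simp only [ContinuousLinearMap.coe_restrictScalars', ContinuousLinearMap.smulRight_apply,
        ContinuousLinearMap.one_apply, ContinuousLinearMap.sub_apply,
        ContinuousLinearMap.coe_comp', Function.comp_apply, ContinuousLinearMap.smul_apply,
        ContinuousLinearMap.flip_apply, Complex.ofRealCLM_apply, smul_eq_mul]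
      rw [Fc', fderiv_part hopen hu.1 hz, fderiv_part hopen hu.1 hz, ← hD2def]
      have h2 : D2 Complex.I Complex.I = - D2 1 1 := by linarith
      rw [hs, h2]
      simp only [Complex.ext_iff, Complex.mul_re, Complex.mul_im, Complex.I_re, Complex.I_im,
        Complex.sub_re, Complex.sub_im, Complex.ofReal_re, Complex.ofReal_im, Complex.neg_re,
        Complex.neg_im, Complex.add_re, Complex.add_im]
      constructor <;> ring
  have := (hasFDerivAt_complexOfReal (hM ▸ hL)).hasDerivAt
  simpa using this

end aux

section aux2

variable {Ω : Set ℂ} {u v : ℂ → ℝ} {z : ℂ}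

lemma potV_fderiv (hopen : IsOpen Ω) (hu : ContDiffOn ℝ 2 u Ω) (hz : z ∈ Ω) (m : ℂ) :
    fderiv ℝ (potV u) z m
      = -(fderiv ℝ u z 1 * fderiv ℝ (fderiv ℝ u) z m 1
          + fderiv ℝ u z Complex.I * fderiv ℝ (fderiv ℝ u) z m Complex.I) := by
  have ha := hPart hopen hu hz 1
  have hb := hPart hopen hu hz Complex.I
  have h := (((ha.mul ha).add (hb.mul hb)).const_mul (-(1/2:ℝ)))
  have hfun : potV u = fun w => (-(1/2:ℝ)) *
      ((fun w => fderiv ℝ u w 1) w * (fun w => fderiv ℝ u w 1) w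
        + ((fun w => fderiv ℝ u w Complex.I) w * (fun w => fderiv ℝ u w Complex.I) w)) := by
    funext w; simp only [potV, sq]
  rw [hfun]; erw [h.fderiv]
  simp only [ContinuousLinearMap.coe_smul', Pi.smul_apply, ContinuousLinearMap.add_apply,
    ContinuousLinearMap.smul_apply, ContinuousLinearMap.flip_apply, smul_eq_mul]
  ring

lemma neg_two_wdzbar_potV (hopen : IsOpen Ω) (hu : HarmOn u Ω) (hz : z ∈ Ω) :
    -2 * wdzbar (potV u) z = Fc u z * (starRingEnd ℂ) (Fc' u z) := by
  have hP := potV_fderiv hopen hu.1 hz 1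
  have hQ := potV_fderiv hopen hu.1 hz Complex.I
  have hs := hSymm hopen hu.1 hz 1 Complex.I
  have hl := hLap hopen hu hz
  rw [wdzbar, hP, hQ, Fc, Fc', fderiv_part hopen hu.1 hz, fderiv_part hopen hu.1 hz]
  set a1 := fderiv ℝ u z 1
  set a2 := fderiv ℝ u z Complex.I
  set A := fderiv ℝ (fderiv ℝ u) z 1 1
  set Bx := fderiv ℝ (fderiv ℝ u) z 1 Complex.I
  set By := fderiv ℝ (fderiv ℝ u) z Complex.I 1
  set Cy := fderiv ℝ (fderiv ℝ u) z Complex.I Complex.I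
  have h2 : Cy = -A := by linarith
  rw [hs] at *
  rw [h2]
  simp only [Complex.ext_iff, Complex.mul_re, Complex.mul_im, Complex.I_re, Complex.I_im,
    Complex.add_re, Complex.add_im, Complex.sub_re, Complex.sub_im, Complex.ofReal_re,
    Complex.ofReal_im, Complex.neg_re, Complex.neg_im, Complex.div_re, Complex.div_im,
    Complex.conj_re, Complex.conj_im, Complex.normSq_ofNat, map_sub, Complex.ofReal_neg]
  norm_num
  constructor <;> ring

lemma Fc_contOn (hopen : IsOpen Ω) (hu : ContDiffOn ℝ 2 u Ω) : ContinuousOn (Fc u) Ω := by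
  have h := hu.continuousOn_fderiv_of_isOpen hopen (by norm_num)
  have h1 : ContinuousOn (fun w => fderiv ℝ u w 1) Ω :=
    (ContinuousLinearMap.apply ℝ ℝ (1:ℂ)).continuous.comp_continuousOn h
  have h2 : ContinuousOn (fun w => fderiv ℝ u w Complex.I) Ω :=
    (ContinuousLinearMap.apply ℝ ℝ (Complex.I)).continuous.comp_continuousOn h
  exact (Complex.continuous_ofReal.comp_continuousOn h1).sub
    (continuousOn_const.mul (Complex.continuous_ofReal.comp_continuousOn h2))

lemma Fc'_contOn (hopen : IsOpen Ω) (hu : ContDiffOn ℝ 2 u Ω) : ContinuousOn (Fc' u) Ω := by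
  have h1 : ContDiffOn ℝ 1 (fderiv ℝ u) Ω := hu.fderiv_of_isOpen hopen (by norm_num)
  have h := h1.continuousOn_fderiv_of_isOpen hopen le_rfl
  have h2 : ContinuousOn (fun w => fderiv ℝ (fderiv ℝ u) w 1 1) Ω :=
    (ContinuousLinearMap.apply ℝ ℝ (1:ℂ)).continuous.comp_continuousOn
      ((ContinuousLinearMap.apply ℝ (ℂ →L[ℝ] ℝ) (1:ℂ)).continuous.comp_continuousOn h)
  have h3 : ContinuousOn (fun w => fderiv ℝ (fderiv ℝ u) w 1 Complex.I) Ω :=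
    (ContinuousLinearMap.apply ℝ ℝ (Complex.I)).continuous.comp_continuousOn
      ((ContinuousLinearMap.apply ℝ (ℂ →L[ℝ] ℝ) (1:ℂ)).continuous.comp_continuousOn h)
  have hc : ContinuousOn (fun w => ((fderiv ℝ (fderiv ℝ u) w 1 1 : ℝ) : ℂ)
      - Complex.I * ((fderiv ℝ (fderiv ℝ u) w 1 Complex.I : ℝ) : ℂ)) Ω :=
    (Complex.continuous_ofReal.comp_continuousOn h2).sub
      (continuousOn_const.mul (Complex.continuous_ofReal.comp_continuousOn h3))
  apply hc.congr
  intro w hw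
  rw [Fc', fderiv_part hopen hu hw, fderiv_part hopen hu hw]

lemma normSq_Fc (u : ℂ → ℝ) (z : ℂ) :
    Complex.normSq (Fc u z) = (fderiv ℝ u z 1)^2 + (fderiv ℝ u z Complex.I)^2 := by
  simp only [Fc, Complex.normSq_apply, Complex.sub_re, Complex.sub_im, Complex.mul_re,
    Complex.mul_im, Complex.I_re, Complex.I_im, Complex.ofReal_re, Complex.ofReal_im, sq]
  ring

lemma clm_apply_basis (L : ℂ →L[ℝ] ℝ) (p : ℂ) : L p = p.re * L 1 + p.im * L Complex.I := by
  have hh : p = p.re • (1 : ℂ) + p.im • Complex.I := by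
    simp only [Complex.real_smul, Complex.ofReal_re, Complex.ofReal_im, mul_one]
    rw [Complex.re_add_im]
  conv_lhs => rw [hh]
  rw [map_add, _root_.map_smul, _root_.map_smul]
  simp [smul_eq_mul]

lemma w_hasDerivAt (hopen : IsOpen Ω) (hu : ContDiffOn ℝ 2 u Ω) (hv : ContDiffOn ℝ 1 v Ω)
    (hCR : ∀ z ∈ Ω, fderiv ℝ v z 1 = -(fderiv ℝ u z Complex.I) ∧
      fderiv ℝ v z Complex.I = fderiv ℝ u z 1)
    {q : ℝ → ℂ} {p : ℂ} {t : ℝ} (hq : HasDerivAt q p t) (hqΩ : q t ∈ Ω) :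
    HasDerivAt (fun s => ((u (q s) : ℝ) : ℂ) + Complex.I * ((v (q s) : ℝ) : ℂ))
      (Fc u (q t) * p) t := by
  have hu' : HasFDerivAt u (fderiv ℝ u (q t)) (q t) :=
    ((hu.differentiableOn (by norm_num)).differentiableAt (hopen.mem_nhds hqΩ)).hasFDerivAt
  have hv' : HasFDerivAt v (fderiv ℝ v (q t)) (q t) :=
    ((hv.differentiableOn one_ne_zero).differentiableAt (hopen.mem_nhds hqΩ)).hasFDerivAt
  have h1 : HasDerivAt (fun s => u (q s)) (fderiv ℝ u (q t) p) t := hu'.comp_hasDerivAt t hq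
  have h2 : HasDerivAt (fun s => v (q s)) (fderiv ℝ v (q t) p) t := hv'.comp_hasDerivAt t hq
  have h1c : HasDerivAt (fun s => ((u (q s) : ℝ) : ℂ)) ((fderiv ℝ u (q t) p : ℝ) : ℂ) t :=
    Complex.ofRealCLM.hasFDerivAt.comp_hasDerivAt t h1
  have h2c : HasDerivAt (fun s => Complex.I * ((v (q s) : ℝ) : ℂ))
      (Complex.I * ((fderiv ℝ v (q t) p : ℝ) : ℂ)) t :=
    (Complex.ofRealCLM.hasFDerivAt.comp_hasDerivAt t h2).const_mul Complex.I
  have := h1c.add h2c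
  convert this using 1
  · rfl
  · rfl
  rw [clm_apply_basis (fderiv ℝ u (q t)) p, clm_apply_basis (fderiv ℝ v (q t)) p,
    (hCR _ hqΩ).1, (hCR _ hqΩ).2]
  simp only [Fc, Complex.ext_iff, Complex.mul_re, Complex.mul_im, Complex.add_re, Complex.add_im,
    Complex.sub_re, Complex.sub_im, Complex.I_re, Complex.I_im, Complex.ofReal_re,
    Complex.ofReal_im, Complex.ofReal_add, Complex.ofReal_mul, Complex.ofReal_neg,
    Complex.neg_re, Complex.neg_im]
  constructor <;> ring

end aux2

lemma line_of_im_eq_zero {c xi : ℂ} (hc : c ≠ 0) (h : ((starRingEnd ℂ) c * xi).im = 0) :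
    ∃ s : ℝ, xi = (s : ℂ) * c := by
  refine ⟨((starRingEnd ℂ) c * xi).re / Complex.normSq c, ?_⟩
  have h1 : (starRingEnd ℂ) c * xi = ((((starRingEnd ℂ) c * xi).re : ℝ) : ℂ) :=
    Complex.ext (by simp) (by simpa using h)
  have hns : ((Complex.normSq c : ℝ) : ℂ) ≠ 0 := by
    exact_mod_cast (Complex.normSq_pos.mpr hc).ne'
  push_cast [Complex.ofReal_div]
  rw [div_mul_eq_mul_div, eq_div_iff hns, ← Complex.mul_conj]
  linear_combination c * h1


end

/-- Let `u` be harmonic on `Ω` with harmonic conjugate `v`, and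
`f = u + iv`. For the Hamiltonian system `dq/dt = p`, `dp/dt = -2∂V/∂q̄` with
`H = (1/2)|p|² + V(q)`, `V = -(1/2)|∇u|²`, the traces in `Ω` of trajectories on the
zero-energy surface `H = 0` are exactly the inverse images under `w = f(z)` of the
straight lines in the `w`-plane: every moving zero-energy trajectory is mapped by `f`
into a straight line, and conversely through every noncritical point there is a
zero-energy trajectory mapped by `f` into any prescribed line through its image. -/
theorem zero_energy_trajectories
    (Ω : Set ℂ) (u v : ℂ → ℝ)
    (hopen : IsOpen Ω) (hu : HarmOn u Ω)
    (hv : ContDiffOn ℝ 1 v Ω)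
    (hCR : ∀ z ∈ Ω, fderiv ℝ v z 1 = -(fderiv ℝ u z Complex.I) ∧
      fderiv ℝ v z Complex.I = fderiv ℝ u z 1) :
    (∀ q p : ℝ → ℂ, (∀ t, q t ∈ Ω) →
      (∀ t, HasDerivAt q (p t) t) →
      (∀ t, HasDerivAt p (-2 * wdzbar (potV u) (q t)) t) →
      (∀ t, (1 / 2) * ‖p t‖ ^ 2 + potV u (q t) = 0) →
      (∀ t, p t ≠ 0) →
      ∃ w₀ dir : ℂ, dir ≠ 0 ∧
        ∀ t, ∃ s : ℝ, ((u (q t) : ℝ) : ℂ) + Complex.I * ((v (q t) : ℝ) : ℂ)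
          = w₀ + (s : ℂ) * dir) ∧
    (∀ z₀ ∈ Ω, wdz u z₀ ≠ 0 → ∀ dir : ℂ, dir ≠ 0 →
      ∃ ε > (0:ℝ), ∃ q p : ℝ → ℂ, q 0 = z₀ ∧
        ∀ t ∈ Set.Ioo (-ε) ε, q t ∈ Ω ∧
          HasDerivAt q (p t) t ∧
          HasDerivAt p (-2 * wdzbar (potV u) (q t)) t ∧
          (1 / 2) * ‖p t‖ ^ 2 + potV u (q t) = 0 ∧
          ∃ s : ℝ, ((u (q t) : ℝ) : ℂ) + Complex.I * ((v (q t) : ℝ) : ℂ)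
            = (((u z₀ : ℝ) : ℂ) + Complex.I * ((v z₀ : ℝ) : ℂ)) + (s : ℂ) * dir) := by
  constructor
  · intro q p hqΩ hq hp hE hp0

    -- the "momentum map" r t = f'(q t) * p t
    set r : ℝ → ℂ := fun t => Fc u (q t) * p t with hrdef
    set r' : ℝ → ℂ := fun t =>
      Fc' u (q t) * p t * p t + Fc u (q t) * (Fc u (q t) * (starRingEnd ℂ) (Fc' u (q t)))
      with hr'def
    -- energy conservation in complex form
    have hnormsq : ∀ t, Complex.normSq (p t) = Complex.normSq (Fc u (q t)) := by
      intro t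
      have h := hE t
      rw [potV] at h
      rw [normSq_Fc]
      have hn : ‖p t‖ ^ 2 = Complex.normSq (p t) := by
        rw [Complex.sq_norm]
      nlinarith [hn]
    have hpc : ∀ t, p t * (starRingEnd ℂ) (p t) = Fc u (q t) * (starRingEnd ℂ) (Fc u (q t)) := by
      intro t
      rw [Complex.mul_conj, Complex.mul_conj, hnormsq t]
    have hF0 : ∀ t, Fc u (q t) ≠ 0 := by
      intro t
      intro h
      have := hnormsq t
      rw [h, Complex.normSq_zero] at this
      exact hp0 t (by rwa [← Complex.normSq_eq_zero])
    have hr0 : ∀ t, r t ≠ 0 := fun t => mul_ne_zero (hF0 t) (hp0 t)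
    -- derivative of r
    have hF : ∀ t, HasDerivAt (fun s => Fc u (q s)) (p t * Fc' u (q t)) t := by
      intro t
      have h0 : HasFDerivAt (Fc u)
          ((ContinuousLinearMap.smulRight (1 : ℂ →L[ℂ] ℂ) (Fc' u (q t))).restrictScalars ℝ)
          (q t) := ((Fc_hasDerivAt hopen hu (hqΩ t)).hasFDerivAt).restrictScalars ℝ
      have := h0.comp_hasDerivAt t (hq t)
      simpa [smul_eq_mul, Function.comp_def] using this
    have hr : ∀ t, HasDerivAt r (r' t) t := by
      intro t
      have := (hF t).mul (hp t)
      rw [neg_two_wdzbar_potV hopen hu (hqΩ t)] at this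
      convert this using 1
      · rfl
      · rfl
      simp only [hr'def]; ring
    -- key: conj r * r' is real
    have him : ∀ t, ((starRingEnd ℂ) (r t) * r' t).im = 0 := by
      intro t
      have key : (starRingEnd ℂ) (r t) * r' t
          = (Fc' u (q t) * p t * Fc u (q t) * ((starRingEnd ℂ) (Fc u (q t)))^2)
            + (starRingEnd ℂ) (Fc' u (q t) * p t * Fc u (q t)
                * ((starRingEnd ℂ) (Fc u (q t)))^2) := by
        simp only [hrdef, hr'def, map_mul, map_pow, Complex.conj_conj]
        linear_combination ((starRingEnd ℂ) (Fc u (q t))) * Fc' u (q t) * p t * hpc t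
      rw [key, Complex.add_conj]
      simp
    -- the real logarithmic-derivative
    set lam : ℝ → ℝ := fun t => ((starRingEnd ℂ) (r t) * r' t).re / Complex.normSq (r t)
      with hlamdef
    have hlr : ∀ t, r' t = ((lam t : ℝ) : ℂ) * r t := by
      intro t
      have h1 : (starRingEnd ℂ) (r t) * r' t
          = ((((starRingEnd ℂ) (r t) * r' t).re : ℝ) : ℂ) := by
        apply Complex.ext <;> simp [him t]
      have hns : ((Complex.normSq (r t) : ℝ) : ℂ) ≠ 0 := by
        exact_mod_cast (Complex.normSq_pos.mpr (hr0 t)).ne'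
      have h2 : ((Complex.normSq (r t) : ℝ) : ℂ) * r' t
          = ((((starRingEnd ℂ) (r t) * r' t).re : ℝ) : ℂ) * r t := by
        rw [← Complex.mul_conj]
        linear_combination r t * h1
      rw [hlamdef]
      push_cast [Complex.ofReal_div]
      rw [div_mul_eq_mul_div, eq_div_iff hns]
      linear_combination h2
    -- continuity
    have hqc : Continuous q := by
      rw [continuous_iff_continuousAt]; exact fun t => (hq t).continuousAt
    have hpcont : Continuous p := by
      rw [continuous_iff_continuousAt]; exact fun t => (hp t).continuousAt
    have hFqc : Continuous (fun t => Fc u (q t)) :=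
      (Fc_contOn hopen hu.1).comp_continuous hqc hqΩ
    have hF'qc : Continuous (fun t => Fc' u (q t)) :=
      (Fc'_contOn hopen hu.1).comp_continuous hqc hqΩ
    have hrc : Continuous r := hFqc.mul hpcont
    have hr'c : Continuous r' := by
      apply Continuous.add
      · exact (hF'qc.mul hpcont).mul hpcont
      · exact hFqc.mul (hFqc.mul (Complex.continuous_conj.comp hF'qc))
    have hlamc : Continuous lam := by
      apply Continuous.div
      · exact Complex.continuous_re.comp ((Complex.continuous_conj.comp hrc).mul hr'c)
      · exact Complex.continuous_normSq.comp hrc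
      · exact fun t => (Complex.normSq_pos.mpr (hr0 t)).ne'
    -- integrating factor
    set Lam : ℝ → ℝ := fun t => ∫ s in (0:ℝ)..t, lam s with hLamdef
    have hLam : ∀ t, HasDerivAt Lam (lam t) t := fun t =>
      (hlamc.integral_hasStrictDerivAt 0 t).hasDerivAt
    set c : ℂ := r 0 with hcdef
    set ψ : ℝ → ℝ := fun t => ((starRingEnd ℂ) c * r t).im with hψdef
    have hψ : ∀ t, HasDerivAt ψ (lam t * ψ t) t := by
      intro t
      have h1 : HasDerivAt (fun s => (starRingEnd ℂ) c * r s) ((starRingEnd ℂ) c * r' t) t :=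
        (hr t).const_mul _
      have h2 := Complex.imCLM.hasFDerivAt.comp_hasDerivAt t h1
      have h3 : HasDerivAt ψ (((starRingEnd ℂ) c * r' t).im) t := h2
      have hval : ((starRingEnd ℂ) c * r' t).im = lam t * ψ t := by
        rw [hlr t, mul_left_comm, Complex.mul_im]
        simp only [Complex.ofReal_re, Complex.ofReal_im, zero_mul, add_zero]
        rfl
      rwa [hval] at h3
    have hψ0 : ∀ t, ψ t = 0 := by
      intro t
      set g : ℝ → ℝ := fun t => Real.exp (-Lam t) * ψ t with hgdef
      have hg : ∀ s, HasDerivAt g 0 s := by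
        intro s
        have h1 : HasDerivAt (fun t => Real.exp (-Lam t)) (-lam s * Real.exp (-Lam s)) s := by
          have := ((hLam s).neg).exp
          simpa [mul_comm] using this
        have := h1.mul (hψ s)
        convert this using 1
        · rfl
        · rfl
        · rfl
        ring
      have hgc : g t = g 0 :=
        is_const_of_deriv_eq_zero (fun s => (hg s).differentiableAt) (fun s => (hg s).deriv) t 0
      have hg0 : g 0 = 0 := by
        simp only [hgdef, hψdef, hcdef]
        rw [mul_comm ((starRingEnd ℂ) (r 0)) (r 0), Complex.mul_conj]
        simp
      have hexp : Real.exp (-Lam t) ≠ 0 := (Real.exp_pos _).ne'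
      exact (mul_eq_zero.mp
        (show Real.exp (-Lam t) * ψ t = 0 from hgc.trans hg0)).resolve_left hexp
    -- the image curve
    set w : ℝ → ℂ := fun t => ((u (q t) : ℝ) : ℂ) + Complex.I * ((v (q t) : ℝ) : ℂ) with hwdef
    have hw : ∀ t, HasDerivAt w (r t) t := fun t =>
      w_hasDerivAt hopen hu.1 hv hCR (hq t) (hqΩ t)
    set Φ : ℝ → ℝ := fun t => ((starRingEnd ℂ) c * (w t - w 0)).im with hΦdef
    have hΦ : ∀ t, HasDerivAt Φ (ψ t) t := by
      intro t
      have h1 : HasDerivAt (fun s => (starRingEnd ℂ) c * (w s - w 0)) ((starRingEnd ℂ) c * r t) t :=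
        (((hw t).sub_const (w 0))).const_mul _
      exact Complex.imCLM.hasFDerivAt.comp_hasDerivAt t h1
    have hΦ0 : ∀ t, Φ t = 0 := by
      intro t
      have hc : Φ t = Φ 0 :=
        is_const_of_deriv_eq_zero (fun s => (hΦ s).differentiableAt)
          (fun s => by rw [(hΦ s).deriv, hψ0 s]) t 0
      rw [hc]
      show ((starRingEnd ℂ) c * (w 0 - w 0)).im = 0
      rw [sub_self, mul_zero]
      rfl
    refine ⟨w 0, c, hr0 0, fun t => ?_⟩
    obtain ⟨s, hs⟩ := line_of_im_eq_zero (hr0 0)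
      (show ((starRingEnd ℂ) c * (w t - w 0)).im = 0 from hΦ0 t)
    refine ⟨s, ?_⟩
    show w t = w 0 + (s : ℂ) * c
    rw [← hs]; ring
  · intro z₀ hz₀ hwdz dir hdir
    -- the unit direction
    set e : ℂ := dir * ((‖dir‖ : ℝ) : ℂ)⁻¹ with hedef
    have hnd : (0:ℝ) < ‖dir‖ := norm_pos_iff.mpr hdir
    have hne : ‖e‖ = 1 := by
      rw [hedef, norm_mul, norm_inv, Complex.norm_real, norm_norm]
      field_simp
    have he0 : e ≠ 0 := by
      intro h; rw [h, norm_zero] at hne; norm_num at hne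
    have hee : e * (starRingEnd ℂ) e = 1 := by
      rw [Complex.mul_conj]
      rw [← Complex.sq_norm, hne]
      norm_num
    -- nonvanishing of F at z₀
    have hFz0 : Fc u z₀ ≠ 0 := by
      intro h
      apply hwdz
      rw [wdz]
      rw [Fc] at h
      rw [h]
      ring
    -- the ODE vector field
    set g : ℂ → ℂ := fun z => e * (starRingEnd ℂ) (Fc u z) with hgdef
    have hFdiff : DifferentiableOn ℂ (Fc u) Ω := fun z hz =>
      ((Fc_hasDerivAt hopen hu hz).differentiableAt).differentiableWithinAt
    have hganal : ContDiffAt ℝ 1 g z₀ := by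
      have h1 : AnalyticAt ℂ (Fc u) z₀ := hFdiff.analyticAt (hopen.mem_nhds hz₀)
      have h2 : ContDiffAt ℝ 1 (Fc u) z₀ := (h1.contDiffAt).restrict_scalars ℝ
      exact contDiffAt_const.mul ((Complex.conjCLE.contDiff.contDiffAt).comp z₀ h2)
    obtain ⟨q, hq0, ε₀, hε₀, hqd⟩ := ContDiffAt.exists_forall_mem_closedBall_exists_eq_forall_mem_Ioo_hasDerivAt₀ hganal (0:ℝ)
    -- shrink so that q stays in Ω
    have hqcont : ContinuousAt q 0 := (hqd 0 (by constructor <;> simp [hε₀] <;> linarith)).continuousAt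
    have hΩnh : Ω ∈ nhds (q 0) := by rw [hq0]; exact hopen.mem_nhds hz₀
    obtain ⟨δ, hδ, hδsub⟩ := Metric.mem_nhds_iff.mp (hqcont.preimage_mem_nhds hΩnh)
    set ε : ℝ := min ε₀ δ with hεdef
    have hε : 0 < ε := lt_min hε₀ hδ
    set p : ℝ → ℂ := fun t => e * (starRingEnd ℂ) (Fc u (q t)) with hpdef
    refine ⟨ε, hε, q, p, hq0, ?_⟩
    have hmem : ∀ t ∈ Set.Ioo (-ε) ε, q t ∈ Ω := by
      intro t ht
      apply hδsub
      rw [Metric.mem_ball, Real.dist_eq, sub_zero, abs_lt]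
      exact ⟨lt_of_le_of_lt (neg_le_neg (min_le_right _ _)) ht.1, lt_of_lt_of_le ht.2 (min_le_right _ _)⟩
    have hIoo : ∀ t ∈ Set.Ioo (-ε) ε, t ∈ Set.Ioo (0 - ε₀) (0 + ε₀) := by
      intro t ht
      constructor
      · rw [zero_sub]; exact lt_of_le_of_lt (neg_le_neg (min_le_left _ _)) ht.1
      · rw [zero_add]; exact lt_of_lt_of_le ht.2 (min_le_left _ _)
    have hq' : ∀ t ∈ Set.Ioo (-ε) ε, HasDerivAt q (p t) t := fun t ht => hqd t (hIoo t ht)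
    -- derivative of p
    have hF : ∀ t ∈ Set.Ioo (-ε) ε, HasDerivAt (fun s => Fc u (q s)) (p t * Fc' u (q t)) t := by
      intro t ht
      have h0 : HasFDerivAt (Fc u)
          ((ContinuousLinearMap.smulRight (1 : ℂ →L[ℂ] ℂ) (Fc' u (q t))).restrictScalars ℝ)
          (q t) := ((Fc_hasDerivAt hopen hu (hmem t ht)).hasFDerivAt).restrictScalars ℝ
      have := h0.comp_hasDerivAt t (hq' t ht)
      simpa [smul_eq_mul, Function.comp_def] using this
    have hp' : ∀ t ∈ Set.Ioo (-ε) ε, HasDerivAt p (-2 * wdzbar (potV u) (q t)) t := by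
      intro t ht
      have h1 := Complex.conjCLE.hasFDerivAt.comp_hasDerivAt t (hF t ht)
      have h2 : HasDerivAt (fun s => (starRingEnd ℂ) (Fc u (q s)))
          ((starRingEnd ℂ) (p t * Fc' u (q t))) t := h1
      have h3 := h2.const_mul e
      have hval : e * (starRingEnd ℂ) (p t * Fc' u (q t)) = -2 * wdzbar (potV u) (q t) := by
        rw [neg_two_wdzbar_potV hopen hu (hmem t ht)]
        rw [hpdef]
        simp only [map_mul, Complex.conj_conj]
        calc e * ((starRingEnd ℂ) e * Fc u (q t) * (starRingEnd ℂ) (Fc' u (q t)))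
            = (e * (starRingEnd ℂ) e) * (Fc u (q t) * (starRingEnd ℂ) (Fc' u (q t))) := by ring
          _ = Fc u (q t) * (starRingEnd ℂ) (Fc' u (q t)) := by rw [hee, one_mul]
      rw [← hval]
      exact h3
    -- energy
    have hEn : ∀ t ∈ Set.Ioo (-ε) ε, (1 / 2) * ‖p t‖ ^ 2 + potV u (q t) = 0 := by
      intro t ht
      have h1 : ‖p t‖ ^ 2 = Complex.normSq (Fc u (q t)) := by
        rw [hpdef]
        simp only [norm_mul, hne, one_mul]
        rw [RCLike.norm_conj, Complex.sq_norm]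
      rw [h1, normSq_Fc u (q t), potV]
      ring
    -- the straight line property
    intro t ht
    refine ⟨hmem t ht, hq' t ht, hp' t ht, hEn t ht, ?_⟩
    set w : ℝ → ℂ := fun s => ((u (q s) : ℝ) : ℂ) + Complex.I * ((v (q s) : ℝ) : ℂ) with hwdef
    have hw : ∀ s ∈ Set.Ioo (-ε) ε, HasDerivAt w (Fc u (q s) * p s) s := fun s hs =>
      w_hasDerivAt hopen hu.1 hv hCR (hq' s hs) (hmem s hs)
    set Φ : ℝ → ℝ := fun s => ((starRingEnd ℂ) e * (w s - w 0)).im with hΦdef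
    have hΦd : ∀ s ∈ Set.Ioo (-ε) ε, HasDerivWithinAt Φ 0 (Set.Ioo (-ε) ε) s := by
      intro s hs
      have h1 : HasDerivAt (fun x => (starRingEnd ℂ) e * (w x - w 0))
          ((starRingEnd ℂ) e * (Fc u (q s) * p s)) s := ((hw s hs).sub_const (w 0)).const_mul _
      have h2 := Complex.imCLM.hasFDerivAt.comp_hasDerivAt s h1
      have h3 : HasDerivAt Φ (((starRingEnd ℂ) e * (Fc u (q s) * p s)).im) s := h2
      have hval : ((starRingEnd ℂ) e * (Fc u (q s) * p s)).im = 0 := by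
        rw [hpdef]
        have : (starRingEnd ℂ) e * (Fc u (q s) * (e * (starRingEnd ℂ) (Fc u (q s))))
            = ((Complex.normSq (Fc u (q s)) : ℝ) : ℂ) * ((starRingEnd ℂ) e * e) := by
          rw [← Complex.mul_conj]
          ring
        rw [this, mul_comm ((starRingEnd ℂ) e) e, hee, mul_one]
        simp
      rw [hval] at h3
      exact h3.hasDerivWithinAt
    have hΦ0 : Φ t = 0 := by
      have h0mem : (0:ℝ) ∈ Set.Ioo (-ε) ε := by constructor <;> simp [hε] <;> linarith
      have := Convex.norm_image_sub_le_of_norm_hasDerivWithin_le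
        (f := Φ) (f' := fun _ => 0) (C := 0)
        (fun s hs => hΦd s hs) (fun s _ => by simp) (convex_Ioo _ _) h0mem (Set.mem_Ioo.mpr ht)
      have hΦt0 : Φ 0 = 0 := by
        show ((starRingEnd ℂ) e * (w 0 - w 0)).im = 0
        rw [sub_self, mul_zero]; rfl
      have : ‖Φ t - Φ 0‖ ≤ 0 := by simpa using this
      have h2 : Φ t = Φ 0 := by
        have := norm_sub_eq_zero_iff.mp (le_antisymm this (norm_nonneg _))
        exact this
      rw [h2, hΦt0]
    obtain ⟨s, hs⟩ := line_of_im_eq_zero he0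
      (show ((starRingEnd ℂ) e * (w t - w 0)).im = 0 from hΦ0)
    refine ⟨s / ‖dir‖, ?_⟩
    have hw0 : w 0 = ((u z₀ : ℝ) : ℂ) + Complex.I * ((v z₀ : ℝ) : ℂ) := by
      rw [hwdef]; simp only [hq0]
    have hsd : ((s / ‖dir‖ : ℝ) : ℂ) * dir = (s : ℂ) * e := by
      rw [hedef]; push_cast [Complex.ofReal_div]; ring
    show w t = (((u z₀ : ℝ) : ℂ) + Complex.I * ((v z₀ : ℝ) : ℂ)) + ((s / ‖dir‖ : ℝ) : ℂ) * dir
    rw [← hw0, hsd, ← hs]; ring
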